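/- For every positive integer n and every m with n ≤ m ≤ 2n-1, the number n divides C(3n, n+1+m) * C(m-1, n-1), i.e., N_{n,m} = (1/n) * C(3n, n+1+m) * C(m-1, n-1) is a nonnegative integer. -/
import Mathlib


theorem stmt_5 (n m : ℕ) (hn : 0 < n) (hm1 : n ≤ m) (hm2 : m ≤ 2 * n - 1) :
    n ∣ Nat.choose (3 * n) (n + 1 + m) * Nat.choose (m - 1) (n - 1) := by
  obtain ⟨a, rfl⟩ := Nat.exists_eq_succ_of_ne_zero hn.ne'
  have hm0 : m ≠ 0 := by omega
  obtain ⟨b, rfl⟩ := Nat.exists_eq_succ_of_ne_zero hm0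
  set A := Nat.choose (3 * (a + 1)) (a + 1 + 1 + (b + 1)) with hA
  set B := Nat.choose (b + 1 - 1) (a + 1 - 1) with hB
  -- identity 1 : (b+1) * B = C(b+1, a+1) * (a+1)
  have h1 : (b + 1) * B = Nat.choose (b + 1) (a + 1) * (a + 1) := by
    have := Nat.add_one_mul_choose_eq b a
    simpa [hB] using this
  -- identity 2 : 3*(a+1) * C(3(a+1)-1, a+1+b+1) = A * (a+1+1+b+1)
  have h3pos : 3 * (a + 1) ≠ 0 := by positivity
  obtain ⟨c, hc⟩ : ∃ c, 3 * (a + 1) = c + 1 := ⟨3 * a + 2, by ring⟩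
  have h2 : (c + 1) * Nat.choose c (a + 1 + b + 1) =
      Nat.choose (c + 1) (a + 1 + b + 1 + 1) * (a + 1 + b + 1 + 1) := by
    exact Nat.add_one_mul_choose_eq c (a + 1 + b + 1)
  have hA' : A = Nat.choose (c + 1) (a + 1 + b + 1 + 1) := by
    rw [hA, hc]; ring_nf
  set X := A * B with hX
  have d1 : (a + 1) ∣ (b + 1) * X := by
    have : (b + 1) * X = (Nat.choose (b + 1) (a + 1) * A) * (a + 1) := by
      rw [hX]; rw [show (b+1) * (A * B) = ((b+1) * B) * A by ring, h1]; ring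
    exact this ▸ dvd_mul_left _ _
  have d2 : (a + 1) ∣ (b + 2) * X := by
    -- (a+1+1+b+1) * A = (c+1) * C(c, ...) = 3*(a+1)*C(c,...)
    have key : (a + 1 + b + 1 + 1) * A = 3 * (a + 1) * Nat.choose c (a + 1 + b + 1) := by
      rw [hA', hc] at *
      linarith [h2]
    have : (a + 1 + b + 1 + 1) * X = (a + 1) * (3 * Nat.choose c (a + 1 + b + 1) * B) := by
      rw [hX, show (a + 1 + b + 1 + 1) * (A * B) = ((a + 1 + b + 1 + 1) * A) * B by ring,
        key]; ring
    have dall : (a + 1) ∣ (a + 1 + b + 1 + 1) * X := ⟨_, this⟩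
    have : (a + 1 + b + 1 + 1) * X = (a + 1) * X + (b + 2) * X := by ring
    have := Nat.dvd_sub dall (Dvd.intro X rfl)
    simpa [show (a + 1 + b + 1 + 1) * X - (a + 1) * X = (b + 2) * X by
      have : (a + 1 + b + 1 + 1) * X = (a + 1) * X + (b + 2) * X := by ring
      omega] using this
  have := Nat.dvd_sub d2 d1
  simpa [show (b + 2) * X - (b + 1) * X = X by ring_nf; omega] using this
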